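/- Let ε₁, ε₂ : (ℤ_3 × ℤ_3) × (ℤ_3 × ℤ_3) → ℂ be symmetric functions that are equivalent, i.e., there exist a function a : ℤ_3 × ℤ_3 → ℂ with a(u) ≠ 0 for all u, and a matrix A ∈ H₃, such that ε₁(u,v) = a(u)·a(v)·a(u+v)⁻¹·ε₂(uA, vA) for all u, v. Let B₁ and B₂ be ℂ-bilinear maps sl(3,ℂ) × sl(3,ℂ) → sl(3,ℂ) satisfying B_t(X_u, X_v) = ε_t(u,v)·⁅X_u, X_v⁆ for all u, v ∈ I and t = 1, 2. Then there exists a ℂ-linear automorphism g of sl(3,ℂ) such that g(B₁(x,y)) = B₂(g(x), g(y)) for all x, y ∈ sl(3,ℂ). (Graded contractions corresponding to equivalent solutions are isomorphic.) -/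

import Mathlib

open Matrix

attribute [local instance 100] LieRing.ofAssociativeRing

/-- ω = exp(2πi/3). -/
noncomputable def om3 : ℂ := Complex.exp (2 * Real.pi * Complex.I / 3)

/-- The diagonal matrix Q = diag(1, ω, ω²). -/
noncomputable def Qm3 : Matrix (Fin 3) (Fin 3) ℂ :=
  Matrix.diagonal fun j => om3 ^ (j : ℕ)

/-- The matrix P with P_{j,k} = 1 if k ≡ j + 1 (mod 3) and 0 otherwise. -/
noncomputable def Pm3 : Matrix (Fin 3) (Fin 3) ℂ :=
  Matrix.of fun j k => if ((k : ℕ) : ZMod 3) = ((j : ℕ) : ZMod 3) + 1 then 1 else 0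

/-- X_{(r,s)} = Q^r P^s for (r,s) ∈ ℤ_3 × ℤ_3. -/
noncomputable def Xm3 (u : ZMod 3 × ZMod 3) : Matrix (Fin 3) (Fin 3) ℂ :=
  Qm3 ^ u.1.val * Pm3 ^ u.2.val

/-- sl(3,ℂ), the Lie algebra of traceless 3×3 complex matrices. -/
noncomputable abbrev sl3 : LieSubalgebra ℂ (Matrix (Fin 3) (Fin 3) ℂ) :=
  LieAlgebra.SpecialLinear.sl (Fin 3) ℂ

/-- The right action of a 2×2 matrix A over ℤ₃ on a row vector v ∈ ℤ₃ × ℤ₃, v ↦ vA. -/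
def actv (A : Matrix (Fin 2) (Fin 2) (ZMod 3)) (v : ZMod 3 × ZMod 3) : ZMod 3 × ZMod 3 :=
  (v.1 * A 0 0 + v.2 * A 1 0, v.1 * A 0 1 + v.2 * A 1 1)

/-! ### Auxiliary scalar lemmas about ω -/

lemma om3_pow3 : om3 ^ 3 = 1 := by
  rw [om3, ← Complex.exp_nat_mul]
  have : ((3:ℕ) : ℂ) * (2 * Real.pi * Complex.I / 3) = 2 * Real.pi * Complex.I := by
    push_cast; ring
  rw [this, Complex.exp_two_pi_mul_I]

lemma om3_ne_one : om3 ≠ 1 := by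
  rw [om3]
  intro h
  rw [Complex.exp_eq_one_iff] at h
  obtain ⟨n, hn⟩ := h
  have hne : (2 * Real.pi * Complex.I : ℂ) ≠ 0 := by
    simp [Real.pi_ne_zero, Complex.I_ne_zero]
  have h3 : ((3 * n : ℤ) : ℂ) * (2 * Real.pi * Complex.I) = 1 * (2 * Real.pi * Complex.I) := by
    push_cast
    rw [mul_comm (2 * (Real.pi:ℂ)) Complex.I] at hn ⊢
    linear_combination -3 * hn
  have := mul_right_cancel₀ hne h3
  have h4 : (3 * n : ℤ) = 1 := by exact_mod_cast this
  omega

lemma om3_sum : 1 + om3 + om3 ^ 2 = 0 := by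
  have h := om3_pow3
  have h2 : (om3 - 1) * (1 + om3 + om3 ^ 2) = 0 := by linear_combination h
  rcases mul_eq_zero.1 h2 with h3 | h3
  · exact absurd (by linear_combination h3) om3_ne_one
  · exact h3

lemma om3_ne_zero : om3 ≠ 0 := Complex.exp_ne_zero _

lemma om3_pow_mod (n : ℕ) : om3 ^ n = om3 ^ (n % 3) := by
  conv_lhs => rw [← Nat.div_add_mod n 3]
  rw [pow_add, pow_mul, om3_pow3, one_pow, one_mul]

/-- w3 t = ω^t for t : ZMod 3 -/
noncomputable def w3 (t : ZMod 3) : ℂ := om3 ^ t.val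

lemma w3_add (x y : ZMod 3) : w3 (x + y) = w3 x * w3 y := by
  rw [w3, w3, w3, ZMod.val_add, ← om3_pow_mod, pow_add]

/-- sfun k = (-ω)^k for k : ZMod 6 -/
noncomputable def sfun (k : ZMod 6) : ℂ := (-om3) ^ k.val

lemma neg_om3_pow6 : (-om3) ^ 6 = 1 := by
  rw [neg_pow]
  norm_num
  linear_combination (om3 ^ 3 + 1) * om3_pow3

lemma neg_om3_pow_mod (n : ℕ) : (-om3) ^ n = (-om3) ^ (n % 6) := by
  conv_lhs => rw [← Nat.div_add_mod n 6]
  rw [pow_add, pow_mul, neg_om3_pow6, one_pow, one_mul]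

lemma sfun_add (x y : ZMod 6) : sfun (x + y) = sfun x * sfun y := by
  rw [sfun, sfun, sfun, ZMod.val_add, ← neg_om3_pow_mod, pow_add]

lemma sfun_ne_zero (k : ZMod 6) : sfun k ≠ 0 := pow_ne_zero _ (neg_ne_zero.mpr om3_ne_zero)

/-! ### The ZMod 6 exponent bookkeeping and the cocycle identity -/

def em3 (t : ZMod 3) : ZMod 6 := 4 * (t.val : ZMod 6)

def kE (x y : ZMod 3) : ZMod 6 := em3 x + (if y - x = 1 then 0 else em3 2 + 3)

def qf3 (u : ZMod 3 × ZMod 3) : ZMod 3 := u.1 * u.2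

def av3 (a b c d : ZMod 3) (u : ZMod 3 × ZMod 3) : ZMod 3 × ZMod 3 :=
  (u.1 * a + u.2 * c, u.1 * b + u.2 * d)

def lE (a b c d : ZMod 3) (u : ZMod 3 × ZMod 3) : ZMod 6 :=
  if a * d - b * c = 1 then em3 (2 * (qf3 (av3 a b c d u) - qf3 u))
  else em3 (qf3 u - qf3 (av3 a b c d u)) + 3

set_option maxRecDepth 10000 in
lemma cocycle : ∀ a b c d : ZMod 3, (a * d - b * c = 1 ∨ a * d - b * c = -1) →
    ∀ u v : ZMod 3 × ZMod 3, u ≠ 0 → v ≠ 0 → u + v ≠ 0 →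
    ((u.2 * v.1 = v.2 * u.1 ↔
        (av3 a b c d u).2 * (av3 a b c d v).1 = (av3 a b c d v).2 * (av3 a b c d u).1) ∧
      (u.2 * v.1 ≠ v.2 * u.1 →
        kE (u.2 * v.1) (v.2 * u.1) + lE a b c d (u + v) =
          lE a b c d u + lE a b c d v +
            kE ((av3 a b c d u).2 * (av3 a b c d v).1)
              ((av3 a b c d v).2 * (av3 a b c d u).1))) := by decide

lemma zmod3_cases : ∀ x : ZMod 3, x = 0 ∨ x = 1 ∨ x = 2 := by decide

lemma w3_sub_eq (x y : ZMod 3) (h : x ≠ y) :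
    w3 x - w3 y = sfun (kE x y) * (1 - om3) := by
  have h3 := om3_pow3
  simp only [w3, sfun]
  rcases zmod3_cases x with hx | hx | hx <;> rcases zmod3_cases y with hy | hy | hy <;>
    subst hx <;> subst hy <;> try exact absurd rfl h
  · rw [show (kE 0 1).val = 0 from by decide, show (0 : ZMod 3).val = 0 from rfl,
      show (1 : ZMod 3).val = 1 from rfl]; ring
  · rw [show (kE 0 2).val = 5 from by decide, show (0 : ZMod 3).val = 0 from rfl,
      show (2 : ZMod 3).val = 2 from rfl]
    linear_combination (om3 ^ 2 - om3 ^ 3 - 1) * h3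
  · rw [show (kE 1 0).val = 3 from by decide, show (0 : ZMod 3).val = 0 from rfl,
      show (1 : ZMod 3).val = 1 from rfl]
    linear_combination (1 - om3) * h3
  · rw [show (kE 1 2).val = 4 from by decide, show (1 : ZMod 3).val = 1 from rfl,
      show (2 : ZMod 3).val = 2 from rfl]
    linear_combination (om3 ^ 2 - om3) * h3
  · rw [show (kE 2 0).val = 2 from by decide, show (0 : ZMod 3).val = 0 from rfl,
      show (2 : ZMod 3).val = 2 from rfl]
    linear_combination h3
  · rw [show (kE 2 1).val = 1 from by decide, show (1 : ZMod 3).val = 1 from rfl,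
      show (2 : ZMod 3).val = 2 from rfl]
    ring

/-! ### The matrices Xm3 -/

/-- Fin 3 → ZMod 3 -/
def zf (j : Fin 3) : ZMod 3 := ((j : ℕ) : ZMod 3)
/-- ZMod 3 → Fin 3 -/
def zfin (c : ZMod 3) : Fin 3 := ⟨c.val, c.val_lt⟩

lemma zf_zfin (c : ZMod 3) : zf (zfin c) = c := by
  revert c; decide

lemma zf_val (j : Fin 3) : (zf j).val = (j : ℕ) := by
  revert j; decide

lemma Ppow (s : ZMod 3) :
    Pm3 ^ s.val = Matrix.of fun j k => if zf k = zf j + s then 1 else 0 := by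
  rcases (show ∀ s : ZMod 3, s = 0 ∨ s = 1 ∨ s = 2 by decide) s with hs | hs | hs <;> subst hs
  · show Pm3 ^ 0 = _
    rw [pow_zero]
    ext j k
    fin_cases j <;> fin_cases k <;> simp [Matrix.one_apply, zf] <;>
      simp (config := { decide := true })
  · show Pm3 ^ 1 = _
    rw [pow_one]
    ext j k
    fin_cases j <;> fin_cases k <;> simp [Pm3, zf] <;> simp (config := { decide := true })
  · show Pm3 ^ 2 = _
    rw [pow_two]
    ext j k
    fin_cases j <;> fin_cases k <;>
      simp [Pm3, Matrix.mul_apply, Fin.sum_univ_three, zf] <;>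
      simp (config := { decide := true })

lemma Qpow (r : ZMod 3) :
    Qm3 ^ r.val = Matrix.diagonal (fun j => w3 (r * zf j)) := by
  rw [Qm3, Matrix.diagonal_pow]
  have : ((fun j : Fin 3 => om3 ^ (j : ℕ)) ^ r.val) = fun j => w3 (r * zf j) := by
    funext j
    rw [Pi.pow_apply, ← pow_mul, w3, ZMod.val_mul, zf_val, ← om3_pow_mod, Nat.mul_comm]
  rw [this]

lemma Xm3_apply (u : ZMod 3 × ZMod 3) (j k : Fin 3) :
    Xm3 u j k = if zf k = zf j + u.2 then w3 (u.1 * zf j) else 0 := by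
  rw [Xm3, Qpow, Ppow, Matrix.diagonal_mul]
  simp only [Matrix.of_apply]
  split_ifs <;> simp

lemma sum_if_eq (c : ZMod 3) (f : Fin 3 → ℂ) :
    (∑ l : Fin 3, if zf l = c then f l else 0) = f (zfin c) := by
  rw [Fin.sum_univ_three]
  rcases (show ∀ s : ZMod 3, s = 0 ∨ s = 1 ∨ s = 2 by decide) c with hc | hc | hc <;>
    subst hc <;>
    norm_num [show zf 0 = 0 from rfl, show zf 1 = 1 from rfl, show zf 2 = 2 from rfl,
      show zfin 0 = 0 from rfl, show zfin 1 = 1 from rfl, show zfin 2 = 2 from rfl] <;>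
    simp (config := { decide := true })

lemma Xm3_mul (u v : ZMod 3 × ZMod 3) :
    Xm3 u * Xm3 v = w3 (u.2 * v.1) • Xm3 (u + v) := by
  ext j k
  rw [Matrix.mul_apply]
  simp only [Xm3_apply, Matrix.smul_apply, smul_eq_mul]
  have : ∀ l : Fin 3,
      (if zf l = zf j + u.2 then w3 (u.1 * zf j) else 0) *
        (if zf k = zf l + v.2 then w3 (v.1 * zf l) else 0) =
      (if zf l = zf j + u.2 then
        (w3 (u.1 * zf j) * if zf k = zf l + v.2 then w3 (v.1 * zf l) else 0) else 0) := by
    intro l; split_ifs <;> simp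
  rw [Finset.sum_congr rfl (fun l _ => this l), sum_if_eq (zf j + u.2)
    (fun l => w3 (u.1 * zf j) * if zf k = zf l + v.2 then w3 (v.1 * zf l) else 0)]
  rw [zf_zfin]
  simp only [Prod.fst_add, Prod.snd_add]
  by_cases h : zf k = zf j + u.2 + v.2
  · rw [if_pos h, if_pos (by rw [h]; ring)]
    rw [← w3_add, ← w3_add]
    congr 1
    ring
  · rw [if_neg h, if_neg (by intro hc; exact h (by rw [hc]; ring)), mul_zero, mul_zero]

lemma sum_w3 (t : ZMod 3) :
    w3 (t * 0) + w3 (t * 1) + w3 (t * 2) = if t = 0 then 3 else 0 := by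
  have h3 := om3_pow3
  have hs := om3_sum
  rcases zmod3_cases t with ht | ht | ht <;> subst ht <;> simp only [w3]
  · norm_num
  · rw [show ((1 * 0 : ZMod 3)).val = 0 from rfl, show ((1 * 1 : ZMod 3)).val = 1 from rfl,
      show ((1 * 2 : ZMod 3)).val = 2 from rfl, if_neg (show (1 : ZMod 3) ≠ 0 by decide)]
    norm_num
    linear_combination hs
  · rw [show ((2 * 0 : ZMod 3)).val = 0 from rfl, show ((2 * 1 : ZMod 3)).val = 2 from rfl,
      show ((2 * 2 : ZMod 3)).val = 1 from rfl, if_neg (show (2 : ZMod 3) ≠ 0 by decide)]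
    norm_num
    linear_combination hs

lemma trace_Xm3 (w : ZMod 3 × ZMod 3) (hw : w ≠ 0) : Matrix.trace (Xm3 w) = 0 := by
  rw [Matrix.trace, Fin.sum_univ_three]
  simp only [Matrix.diag_apply, Xm3_apply]
  by_cases hs : w.2 = 0
  · have hr : w.1 ≠ 0 := by
      intro hr; exact hw (Prod.ext hr hs)
    simp only [hs, add_zero, if_pos rfl, ↓reduceIte]
    have := sum_w3 w.1
    rw [if_neg hr] at this
    rw [show (0 : ZMod 3) = zf 0 from rfl] at this
    calc w3 (w.1 * zf 0) + w3 (w.1 * zf 1) + w3 (w.1 * zf 2)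
        = w3 (w.1 * zf 0) + w3 (w.1 * 1) + w3 (w.1 * 2) := by rfl
      _ = 0 := by rw [show (1 : ZMod 3) = zf 0 + 1 from rfl] at this; exact this
  · have : ∀ j : Fin 3, ¬ (zf j = zf j + w.2) := by
      intro j hc
      exact hs (by linear_combination -hc)
    simp [this]

lemma Xm3_mem_sl3 (w : ZMod 3 × ZMod 3) (hw : w ≠ 0) : Xm3 w ∈ sl3 :=
  LinearMap.mem_ker.mpr (trace_Xm3 w hw)

/-! ### Coefficient functionals, linear independence and the basis -/

noncomputable def coefL (w : ZMod 3 × ZMod 3) : Matrix (Fin 3) (Fin 3) ℂ →ₗ[ℂ] ℂ where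
  toFun M := ∑ j : Fin 3, w3 (-w.1 * zf j) * M j (zfin (zf j + w.2))
  map_add' M N := by
    simp only [Matrix.add_apply, mul_add]
    rw [Finset.sum_add_distrib]
  map_smul' c M := by
    simp only [Matrix.smul_apply, smul_eq_mul, RingHom.id_apply, Finset.mul_sum]
    exact Finset.sum_congr rfl fun j _ => by ring

lemma coefL_delta (w u : ZMod 3 × ZMod 3) :
    coefL w (Xm3 u) = if u = w then 3 else 0 := by
  show (∑ j : Fin 3, w3 (-w.1 * zf j) * Xm3 u j (zfin (zf j + w.2))) = _
  simp only [Xm3_apply, zf_zfin]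
  by_cases h2 : u.2 = w.2
  · have hcond : ∀ j : Fin 3, zf j + w.2 = zf j + u.2 := fun j => by rw [h2]
    have hterm : ∀ j : Fin 3, w3 (-w.1 * zf j) * w3 (u.1 * zf j)
        = w3 ((u.1 - w.1) * zf j) := fun j => by
      rw [← w3_add]; congr 1; ring
    rw [Fin.sum_univ_three, if_pos (hcond 0), if_pos (hcond 1), if_pos (hcond 2),
      hterm 0, hterm 1, hterm 2]
    have hsum := sum_w3 (u.1 - w.1)
    rw [show ((0 : ZMod 3)) = zf 0 from rfl, show ((1 : ZMod 3)) = zf 1 from rfl,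
      show ((2 : ZMod 3)) = zf 2 from rfl] at hsum
    rw [hsum]
    by_cases h1 : u.1 = w.1
    · rw [if_pos (show u.1 - w.1 = zf 0 by rw [h1, sub_self]; rfl),
        if_pos (Prod.ext h1 h2)]
    · rw [if_neg (fun hc : u.1 - w.1 = zf 0 => h1 (by
          have h0 : zf 0 = (0 : ZMod 3) := rfl
          rw [h0] at hc
          linear_combination hc)),
        if_neg (fun hc : u = w => h1 (by rw [hc]))]
  · have hcond : ∀ j : Fin 3, ¬ (zf j + w.2 = zf j + u.2) := fun j hc =>
      h2 (by linear_combination -hc)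
    rw [Fin.sum_univ_three, if_neg (hcond 0), if_neg (hcond 1), if_neg (hcond 2),
      if_neg (fun hc : u = w => h2 (by rw [hc]))]
    ring

def Isl : Type := {u : ZMod 3 × ZMod 3 // u ≠ 0}

instance : Fintype Isl := by unfold Isl; infer_instance
instance : DecidableEq Isl := by unfold Isl; infer_instance
instance : Nonempty Isl := ⟨⟨(1, 0), by decide⟩⟩

lemma card_Isl : Fintype.card Isl = 8 := by
  show Fintype.card {u : ZMod 3 × ZMod 3 // u ≠ 0} = 8
  simp [Fintype.card_subtype_compl]

noncomputable def fsl (u : Isl) : ↥sl3 := ⟨Xm3 u.1, Xm3_mem_sl3 u.1 u.2⟩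

lemma fsl_li : LinearIndependent ℂ fsl := by
  rw [Fintype.linearIndependent_iff]
  intro g hg w
  have hM : (∑ u : Isl, g u • Xm3 u.1) = 0 := by
    have := congrArg (Subtype.val : ↥sl3 → Matrix (Fin 3) (Fin 3) ℂ) hg
    rw [AddSubmonoidClass.coe_finset_sum] at this
    simpa [fsl] using this
  have h2 := congrArg (coefL w.1) hM
  rw [map_sum, map_zero] at h2
  simp only [_root_.map_smul, coefL_delta, smul_eq_mul] at h2
  rw [Finset.sum_eq_single w (fun u _ hne => by
      rw [if_neg (fun hc => hne (Subtype.ext hc)), mul_zero])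
    (fun h => absurd (Finset.mem_univ w) h)] at h2
  rw [if_pos rfl] at h2
  have : (3 : ℂ) ≠ 0 := by norm_num
  exact (mul_eq_zero.1 h2).resolve_right this

lemma finrank_sl3 : Module.finrank ℂ ↥sl3 = 8 := by
  have hsurj : Function.Surjective (Matrix.traceLinearMap (Fin 3) ℂ ℂ) := by
    intro c
    refine ⟨Matrix.diagonal ![c, 0, 0], ?_⟩
    simp [Matrix.traceLinearMap, Matrix.trace_diagonal, Fin.sum_univ_three]
  have h1 := LinearMap.finrank_range_add_finrank_ker (Matrix.traceLinearMap (Fin 3) ℂ ℂ)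
  rw [LinearMap.range_eq_top.mpr hsurj, finrank_top] at h1
  have h2 : Module.finrank ℂ (Matrix (Fin 3) (Fin 3) ℂ) = 9 := by
    rw [Module.finrank_matrix]
    simp
  have h3 : Module.finrank ℂ ℂ = 1 := Module.finrank_self ℂ
  show Module.finrank ℂ ↥(LinearMap.ker (Matrix.traceLinearMap (Fin 3) ℂ ℂ)) = 8
  omega

noncomputable def bsl : Module.Basis Isl ℂ ↥sl3 :=
  basisOfLinearIndependentOfCardEqFinrank fsl_li (by rw [card_Isl, finrank_sl3])

lemma bsl_eq (u : Isl) : bsl u = fsl u := by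
  rw [bsl, coe_basisOfLinearIndependentOfCardEqFinrank]

/-! ### Bracket and structure constants -/

noncomputable def k3 (u v : ZMod 3 × ZMod 3) : ℂ := w3 (u.2 * v.1) - w3 (v.2 * u.1)

lemma lie_Xm3 (u v : ZMod 3 × ZMod 3) :
    ⁅Xm3 u, Xm3 v⁆ = k3 u v • Xm3 (u + v) := by
  rw [Ring.lie_def, Xm3_mul, Xm3_mul, add_comm v u, k3, sub_smul]

lemma k3_of_add_eq_zero (u v : ZMod 3 × ZMod 3) (h : u + v = 0) : k3 u v = 0 := by
  have hv : v = -u := by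
    have := congrArg (fun w => w - u) h
    simpa [add_sub_cancel_left] using by linear_combination h
  subst hv
  rw [k3]
  have : u.2 * (-u).1 = (-u).2 * u.1 := by
    simp only [Prod.fst_neg, Prod.snd_neg]
    ring
  rw [this, sub_self]

/-! ### Invertibility of the action -/

lemma av3_add (a b c d : ZMod 3) (u v : ZMod 3 × ZMod 3) :
    av3 a b c d (u + v) = av3 a b c d u + av3 a b c d v := by
  unfold av3
  apply Prod.ext <;> simp only [Prod.fst_add, Prod.snd_add] <;> ring

lemma av3_zero (a b c d : ZMod 3) : av3 a b c d 0 = 0 := by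
  unfold av3
  apply Prod.ext <;> simp

lemma av3_left_inv (a b c d : ZMod 3) (he : (a*d - b*c) * (a*d - b*c) = 1)
    (u : ZMod 3 × ZMod 3) :
    av3 (d*(a*d-b*c)) (-(b*(a*d-b*c))) (-(c*(a*d-b*c))) (a*(a*d-b*c))
      (av3 a b c d u) = u := by
  unfold av3
  apply Prod.ext <;> simp only [] <;> [linear_combination u.1 * he; linear_combination u.2 * he]

lemma av3_right_inv (a b c d : ZMod 3) (he : (a*d - b*c) * (a*d - b*c) = 1)
    (u : ZMod 3 × ZMod 3) :
    av3 a b c d (av3 (d*(a*d-b*c)) (-(b*(a*d-b*c))) (-(c*(a*d-b*c))) (a*(a*d-b*c)) u) = u := by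
  unfold av3
  apply Prod.ext <;> simp only [] <;> [linear_combination u.1 * he; linear_combination u.2 * he]

/-! ### The scalar cocycle identity over ℂ -/

lemma scalar_key (a b c d : ZMod 3) (hd : a * d - b * c = 1 ∨ a * d - b * c = -1)
    (u v : ZMod 3 × ZMod 3) (hu : u ≠ 0) (hv : v ≠ 0) (huv : u + v ≠ 0) :
    k3 u v * sfun (lE a b c d (u + v)) =
      sfun (lE a b c d u) * sfun (lE a b c d v) * k3 (av3 a b c d u) (av3 a b c d v) := by
  obtain ⟨hiff, himp⟩ := cocycle a b c d hd u v hu hv huv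
  by_cases h : u.2 * v.1 = v.2 * u.1
  · rw [k3, h, sub_self, k3, hiff.mp h, sub_self]
    ring
  · have h' : (av3 a b c d u).2 * (av3 a b c d v).1 ≠ (av3 a b c d v).2 * (av3 a b c d u).1 :=
      fun hc => h (hiff.mpr hc)
    rw [k3, k3, w3_sub_eq _ _ h, w3_sub_eq _ _ h']
    have hs : sfun (kE (u.2 * v.1) (v.2 * u.1)) * sfun (lE a b c d (u + v)) =
        sfun (lE a b c d u) * sfun (lE a b c d v) *
          sfun (kE ((av3 a b c d u).2 * (av3 a b c d v).1)
            ((av3 a b c d v).2 * (av3 a b c d u).1)) := by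
      rw [← sfun_add, ← sfun_add, ← sfun_add, himp h]
    linear_combination (1 - om3) * hs

/-! ### Main theorem -/

/-- Graded contractions corresponding to equivalent solutions are isomorphic: if the
    symmetric functions ε₁ and ε₂ are equivalent via a nowhere-vanishing a and a matrix
    A ∈ H₃, and B₁, B₂ are the corresponding contracted bilinear products on sl(3,ℂ)
    (determined by B_t(X_u, X_v) = ε_t(u,v)·⁅X_u,X_v⁆ on the basis elements X_u, u ∈ I),
    then some linear automorphism g of sl(3,ℂ) satisfies g(B₁(x,y)) = B₂(g x, g y). -/
theorem stmt17 (ε₁ ε₂ : (ZMod 3 × ZMod 3) × (ZMod 3 × ZMod 3) → ℂ)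
    (hsym₁ : ∀ u v, ε₁ (u, v) = ε₁ (v, u)) (hsym₂ : ∀ u v, ε₂ (u, v) = ε₂ (v, u))
    (a : ZMod 3 × ZMod 3 → ℂ) (ha : ∀ u, a u ≠ 0)
    (A : Matrix (Fin 2) (Fin 2) (ZMod 3)) (hA : A.det = 1 ∨ A.det = -1)
    (hequiv : ∀ u v : ZMod 3 × ZMod 3,
      ε₁ (u, v) = a u * a v * (a (u + v))⁻¹ * ε₂ (actv A u, actv A v))
    (B₁ B₂ : ↥sl3 →ₗ[ℂ] ↥sl3 →ₗ[ℂ] ↥sl3)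
    (hB₁ : ∀ u v : ZMod 3 × ZMod 3, u ≠ (0, 0) → v ≠ (0, 0) →
      ∀ xu xv : ↥sl3, (xu : Matrix (Fin 3) (Fin 3) ℂ) = Xm3 u →
        (xv : Matrix (Fin 3) (Fin 3) ℂ) = Xm3 v →
        (B₁ xu xv : Matrix (Fin 3) (Fin 3) ℂ) = ε₁ (u, v) • ⁅Xm3 u, Xm3 v⁆)
    (hB₂ : ∀ u v : ZMod 3 × ZMod 3, u ≠ (0, 0) → v ≠ (0, 0) →
      ∀ xu xv : ↥sl3, (xu : Matrix (Fin 3) (Fin 3) ℂ) = Xm3 u →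
        (xv : Matrix (Fin 3) (Fin 3) ℂ) = Xm3 v →
        (B₂ xu xv : Matrix (Fin 3) (Fin 3) ℂ) = ε₂ (u, v) • ⁅Xm3 u, Xm3 v⁆) :
    ∃ g : ↥sl3 ≃ₗ[ℂ] ↥sl3, ∀ x y : ↥sl3, g (B₁ x y) = B₂ (g x) (g y) := by
  classical
  have hd : A 0 0 * A 1 1 - A 0 1 * A 1 0 = 1 ∨ A 0 0 * A 1 1 - A 0 1 * A 1 0 = -1 := by
    rwa [Matrix.det_fin_two] at hA
  have he2 : (A 0 0 * A 1 1 - A 0 1 * A 1 0) * (A 0 0 * A 1 1 - A 0 1 * A 1 0) = 1 := by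
    rcases hd with h | h <;> rw [h] <;> decide
  have hactv : ∀ u, actv A u = av3 (A 0 0) (A 0 1) (A 1 0) (A 1 1) u := fun u => rfl
  -- the index permutation
  set a0 := A 0 0 with ha0
  set b0 := A 0 1 with hb0
  set c0 := A 1 0 with hc0
  set d0 := A 1 1 with hd0
  have havne : ∀ u : ZMod 3 × ZMod 3, u ≠ 0 → av3 a0 b0 c0 d0 u ≠ 0 := by
    intro u hu h0
    apply hu
    rw [← av3_left_inv a0 b0 c0 d0 he2 u, h0, av3_zero]
  have havine : ∀ u : ZMod 3 × ZMod 3, u ≠ 0 →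
      av3 (d0*(a0*d0-b0*c0)) (-(b0*(a0*d0-b0*c0))) (-(c0*(a0*d0-b0*c0))) (a0*(a0*d0-b0*c0)) u ≠ 0 := by
    intro u hu h0
    apply hu
    rw [← av3_right_inv a0 b0 c0 d0 he2 u, h0, av3_zero]
  let σ : Isl ≃ Isl :=
    { toFun := fun u => ⟨av3 a0 b0 c0 d0 u.1, havne u.1 u.2⟩
      invFun := fun u => ⟨av3 (d0*(a0*d0-b0*c0)) (-(b0*(a0*d0-b0*c0)))
        (-(c0*(a0*d0-b0*c0))) (a0*(a0*d0-b0*c0)) u.1, havine u.1 u.2⟩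
      left_inv := fun u => Subtype.ext (av3_left_inv a0 b0 c0 d0 he2 u.1)
      right_inv := fun u => Subtype.ext (av3_right_inv a0 b0 c0 d0 he2 u.1) }
  -- the scaling
  set μ : (ZMod 3 × ZMod 3) → ℂ := fun w => a w * sfun (lE a0 b0 c0 d0 w) with hμdef
  have hμ : ∀ w, μ w ≠ 0 := fun w => mul_ne_zero (ha w) (sfun_ne_zero _)
  -- the linear maps
  set g0 : ↥sl3 →ₗ[ℂ] ↥sl3 := bsl.constr ℂ (fun u => μ u.1 • bsl (σ u)) with hg0
  set g1 : ↥sl3 →ₗ[ℂ] ↥sl3 :=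
    bsl.constr ℂ (fun u => (μ (σ.symm u).1)⁻¹ • bsl (σ.symm u)) with hg1
  have hg0b : ∀ u : Isl, g0 (bsl u) = μ u.1 • bsl (σ u) := fun u => by
    rw [hg0, Module.Basis.constr_basis]
  have hg1b : ∀ u : Isl, g1 (bsl u) = (μ (σ.symm u).1)⁻¹ • bsl (σ.symm u) := fun u => by
    rw [hg1, Module.Basis.constr_basis]
  have hcomp1 : g0.comp g1 = LinearMap.id := by
    apply bsl.ext
    intro u
    rw [LinearMap.comp_apply, hg1b, _root_.map_smul, hg0b, σ.apply_symm_apply, smul_smul,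
      inv_mul_cancel₀ (hμ _), one_smul, LinearMap.id_apply]
  have hcomp2 : g1.comp g0 = LinearMap.id := by
    apply bsl.ext
    intro u
    rw [LinearMap.comp_apply, hg0b, _root_.map_smul, hg1b, σ.symm_apply_apply, smul_smul,
      mul_inv_cancel₀ (hμ _), one_smul, LinearMap.id_apply]
  -- basis coe
  have hcoe : ∀ u : Isl, ((bsl u : ↥sl3) : Matrix (Fin 3) (Fin 3) ℂ) = Xm3 u.1 := fun u => by
    rw [bsl_eq]; rfl
  -- the key identity on basis vectors
  have key : ∀ u v : Isl, g0 (B₁ (bsl u) (bsl v)) = B₂ (g0 (bsl u)) (g0 (bsl v)) := by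
    intro u v
    have hb1 := hB₁ u.1 v.1 u.2 v.2 (bsl u) (bsl v) (hcoe u) (hcoe v)
    rw [lie_Xm3] at hb1
    have hb2 := hB₂ (av3 a0 b0 c0 d0 u.1) (av3 a0 b0 c0 d0 v.1) (havne u.1 u.2) (havne v.1 v.2)
      (bsl (σ u)) (bsl (σ v)) (hcoe (σ u)) (hcoe (σ v))
    rw [lie_Xm3] at hb2
    rw [hg0b, hg0b, LinearMap.map_smul₂, _root_.map_smul]
    by_cases huv : u.1 + v.1 = 0
    · have h1 : B₁ (bsl u) (bsl v) = 0 := by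
        rw [Subtype.ext_iff]
        rw [hb1, k3_of_add_eq_zero u.1 v.1 huv]
        simp
      have havadd : av3 a0 b0 c0 d0 u.1 + av3 a0 b0 c0 d0 v.1 = 0 := by
        rw [← av3_add, huv, av3_zero]
      have h2 : B₂ (bsl (σ u)) (bsl (σ v)) = 0 := by
        rw [Subtype.ext_iff]
        rw [hb2, k3_of_add_eq_zero _ _ havadd]
        simp
      rw [h1, h2]
      simp
    · set w : Isl := ⟨u.1 + v.1, huv⟩ with hw
      have hσw : (σ w).1 = av3 a0 b0 c0 d0 u.1 + av3 a0 b0 c0 d0 v.1 := by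
        show av3 a0 b0 c0 d0 (u.1 + v.1) = _
        rw [av3_add]
      have h1 : B₁ (bsl u) (bsl v) = (ε₁ (u.1, v.1) * k3 u.1 v.1) • bsl w := by
        rw [Subtype.ext_iff]
        rw [hb1]
        rw [show ((((ε₁ (u.1, v.1) * k3 u.1 v.1) • bsl w) : ↥sl3) : Matrix (Fin 3) (Fin 3) ℂ)
          = (ε₁ (u.1, v.1) * k3 u.1 v.1) • ((bsl w : ↥sl3) : Matrix (Fin 3) (Fin 3) ℂ)
          from rfl, hcoe w, smul_smul]
      have h2 : B₂ (bsl (σ u)) (bsl (σ v)) =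
          (ε₂ (av3 a0 b0 c0 d0 u.1, av3 a0 b0 c0 d0 v.1) *
            k3 (av3 a0 b0 c0 d0 u.1) (av3 a0 b0 c0 d0 v.1)) • bsl (σ w) := by
        rw [Subtype.ext_iff]
        rw [hb2]
        rw [show (((_ : ℂ) • bsl (σ w) : ↥sl3) : Matrix (Fin 3) (Fin 3) ℂ)
          = (ε₂ (av3 a0 b0 c0 d0 u.1, av3 a0 b0 c0 d0 v.1) *
            k3 (av3 a0 b0 c0 d0 u.1) (av3 a0 b0 c0 d0 v.1)) •
            ((bsl (σ w) : ↥sl3) : Matrix (Fin 3) (Fin 3) ℂ) from rfl, hcoe (σ w), hσw,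
          smul_smul]
      rw [h1, h2, _root_.map_smul, hg0b w, smul_smul, smul_smul, smul_smul]
      congr 1
      -- the scalar identity
      have hkey := scalar_key a0 b0 c0 d0 hd u.1 v.1 u.2 v.2 huv
      have hinv := inv_mul_cancel₀ (ha (u.1 + v.1))
      have hε := hequiv u.1 v.1
      rw [hactv, hactv] at hε
      rw [hε, hμdef]
      show (a u.1 * a v.1 * (a (u.1 + v.1))⁻¹ *
          ε₂ (av3 a0 b0 c0 d0 u.1, av3 a0 b0 c0 d0 v.1)) * k3 u.1 v.1 *
          (a (u.1 + v.1) * sfun (lE a0 b0 c0 d0 (u.1 + v.1))) =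
        (a u.1 * sfun (lE a0 b0 c0 d0 u.1)) * (a v.1 * sfun (lE a0 b0 c0 d0 v.1)) *
          (ε₂ (av3 a0 b0 c0 d0 u.1, av3 a0 b0 c0 d0 v.1) *
            k3 (av3 a0 b0 c0 d0 u.1) (av3 a0 b0 c0 d0 v.1))
      linear_combination
        (a u.1 * a v.1 * ε₂ (av3 a0 b0 c0 d0 u.1, av3 a0 b0 c0 d0 v.1) * k3 u.1 v.1 *
          sfun (lE a0 b0 c0 d0 (u.1 + v.1))) * hinv +
        (a u.1 * a v.1 * ε₂ (av3 a0 b0 c0 d0 u.1, av3 a0 b0 c0 d0 v.1)) * hkey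
  -- assemble
  refine ⟨LinearEquiv.ofLinear g0 g1 hcomp1 hcomp2, ?_⟩
  intro x y
  have hL : (B₁.compr₂ g0) = ((B₂.comp g0).compl₂ g0) := by
    apply bsl.ext
    intro u
    apply bsl.ext
    intro v
    simpa using key u v
  have := DFunLike.congr_fun (DFunLike.congr_fun hL x) y
  simpa using this
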